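/- Assume S is finite and let e_S = e_W = ∏_{s∈S} e_s ∈ C_W(u). Then e_W is a central idempotent of C_W(u), and the assignment T_w ↦ g_w e_W defines a k-algebra morphism 𝔮 : H_W(u) → C_W(u) (with unit 1 ↦ e_W replaced appropriately, i.e. a morphism of non-unital k-algebras into C_W(u), unital onto the corner e_W C_W(u)) which is a splitting of 𝔭, i.e. 𝔭 ∘ 𝔮 = id on H_W(u). -/

import Mathlib

open scoped Classical

noncomputable section

namespace CWpaper

variable {B : Type} {M : CoxeterMatrix B} {W : Type} [Group W] (cs : CoxeterSystem M W)
variable (k : Type) [CommRing k]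

/-- The set of reflections of the Coxeter system, as a subtype. -/
abbrev Refl := {t : W // cs.IsReflection t}

/-- Index type for the generators of `C_W(u)`: `inl i` indexes `g` generators,
`inr t` indexes `e` generators. -/
abbrev Gen := B ⊕ Refl cs

/-- The free-algebra generator corresponding to `g_s`. -/
def gf (i : B) : FreeAlgebra k (Gen cs) := FreeAlgebra.ι k (Sum.inl i)

/-- The free-algebra generator corresponding to `e_t`. -/
def ef (t : Refl cs) : FreeAlgebra k (Gen cs) := FreeAlgebra.ι k (Sum.inr t)

/-- A simple reflection, as a reflection. -/
def simpleR (i : B) : Refl cs := ⟨cs.simple i, cs.isReflection_simple i⟩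

/-- Conjugate of a reflection by a group element. -/
def conjR (w : W) (t : Refl cs) : Refl cs := ⟨w * t.1 * w⁻¹, t.2.conj w⟩

/-- The defining relations of the algebra `C_W(u)`. -/
inductive CWrel (u : B → k) : FreeAlgebra k (Gen cs) → FreeAlgebra k (Gen cs) → Prop
  | braid (i j : B) (h : M i j ≠ 0) :
      CWrel u (((CoxeterSystem.alternatingWord i j (M i j)).map (gf cs k)).prod)
              (((CoxeterSystem.alternatingWord j i (M i j)).map (gf cs k)).prod)
  | idem (t : Refl cs) : CWrel u (ef cs k t * ef cs k t) (ef cs k t)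
  | comm (t₁ t₂ : Refl cs) : CWrel u (ef cs k t₁ * ef cs k t₂) (ef cs k t₂ * ef cs k t₁)
  | conj (t t₁ : Refl cs) :
      CWrel u (ef cs k t * ef cs k t₁) (ef cs k t * ef cs k (conjR cs t.1 t₁))
  | move (i : B) (t : Refl cs) :
      CWrel u (gf cs k i * ef cs k t) (ef cs k (conjR cs (cs.simple i) t) * gf cs k i)
  | quad (i : B) :
      CWrel u (gf cs k i * gf cs k i)
        (1 + algebraMap k _ (u i - 1) * ef cs k (simpleR cs i) * (1 + gf cs k i))

variable (u : B → k)

/-- The algebra `C_W(u)`. -/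
abbrev CW := RingQuot (CWrel cs k u)

/-- The generator `g_s` of `C_W(u)`. -/
def gCW (i : B) : CW cs k u := RingQuot.mkAlgHom k (CWrel cs k u) (gf cs k i)

/-- The generator `e_t` of `C_W(u)`. -/
def eCW (t : Refl cs) : CW cs k u := RingQuot.mkAlgHom k (CWrel cs k u) (ef cs k t)

theorem eCW_commute (t₁ t₂ : Refl cs) : Commute (eCW cs k u t₁) (eCW cs k u t₂) := by
  have h := RingQuot.mkAlgHom_rel k (CWrel.comm (cs := cs) (k := k) (u := u) t₁ t₂)
  simp only [map_mul] at h
  exact h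

/-- The product `e_J = ∏_{t ∈ J} e_t` for a finite set of reflections `J`. -/
def eJ (J : Finset (Refl cs)) : CW cs k u :=
  J.noncommProd (eCW cs k u) (fun t₁ _ t₂ _ _ => eCW_commute cs k u t₁ t₂)

/-- `gg : W → C_W(u)` is the family `(g_w)_{w ∈ W}` iff for every reduced word
`l` for `w`, `gg w` is the product of the `g_s`, `s ∈ l`. -/
def IsGFamily (gg : W → CW cs k u) : Prop :=
  ∀ l : List B, cs.IsReduced l → gg (cs.wordProd l) = (l.map (gCW cs k u)).prod

end CWpaper

namespace CWpaper

/-- The defining relations of the Iwahori–Hecke algebra `H_W(u)`. -/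
inductive Hrel {B : Type} (M : CoxeterMatrix B) (k : Type) [CommRing k] (u : B → k) :
    FreeAlgebra k B → FreeAlgebra k B → Prop
  | braid (i j : B) (h : M i j ≠ 0) :
      Hrel M k u (((CoxeterSystem.alternatingWord i j (M i j)).map (FreeAlgebra.ι k)).prod)
                 (((CoxeterSystem.alternatingWord j i (M i j)).map (FreeAlgebra.ι k)).prod)
  | quad (i : B) :
      Hrel M k u (FreeAlgebra.ι k i * FreeAlgebra.ι k i)
        (algebraMap k _ (u i) + algebraMap k _ (u i - 1) * FreeAlgebra.ι k i)

/-- The Iwahori–Hecke algebra `H_W(u)`. -/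
abbrev HW {B : Type} (M : CoxeterMatrix B) (k : Type) [CommRing k] (u : B → k) :=
  RingQuot (Hrel M k u)

/-- The generator `T_s` of the Iwahori–Hecke algebra. -/
def THW {B : Type} (M : CoxeterMatrix B) (k : Type) [CommRing k] (u : B → k) (i : B) :
    HW M k u :=
  RingQuot.mkAlgHom k (Hrel M k u) (FreeAlgebra.ι k i)

end CWpaper

namespace CWpaper

/-- The idempotent `e_S = e_W = ∏_{s ∈ S} e_s` (for `S` finite). -/
def eTop {B : Type} {M : CoxeterMatrix B} {W : Type} [Group W] (cs : CoxeterSystem M W)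
    (k : Type) [CommRing k] (u : B → k) [Fintype B] : CW cs k u :=
  eJ cs k u (Finset.univ.image (simpleR cs))


section Splitting

variable {B : Type} {M : CoxeterMatrix B} {W : Type} [Group W] (cs : CoxeterSystem M W)
variable (k : Type) [CommRing k] (u : B → k)

lemma eCW_idem (t : Refl cs) : eCW cs k u t * eCW cs k u t = eCW cs k u t := by
  simpa only [map_mul, eCW] using
    RingQuot.mkAlgHom_rel k (CWrel.idem (cs := cs) (k := k) (u := u) t)

lemma eCW_conj (t t₁ : Refl cs) :
    eCW cs k u t * eCW cs k u t₁ = eCW cs k u t * eCW cs k u (conjR cs t.1 t₁) := by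
  simpa only [map_mul, eCW] using
    RingQuot.mkAlgHom_rel k (CWrel.conj (cs := cs) (k := k) (u := u) t t₁)

lemma gCW_move (i : B) (t : Refl cs) :
    gCW cs k u i * eCW cs k u t = eCW cs k u (conjR cs (cs.simple i) t) * gCW cs k u i := by
  simpa only [map_mul, eCW, gCW] using
    RingQuot.mkAlgHom_rel k (CWrel.move (cs := cs) (k := k) (u := u) i t)

lemma gCW_quad (i : B) :
    gCW cs k u i * gCW cs k u i =
      1 + algebraMap k _ (u i - 1) * eCW cs k u (simpleR cs i) * (1 + gCW cs k u i) := by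
  simpa only [map_mul, map_add, map_one, AlgHom.commutes, eCW, gCW] using
    RingQuot.mkAlgHom_rel k (CWrel.quad (cs := cs) (k := k) (u := u) i)

lemma gCW_braid (i j : B) (h : M i j ≠ 0) :
    ((CoxeterSystem.alternatingWord i j (M i j)).map (gCW cs k u)).prod =
    ((CoxeterSystem.alternatingWord j i (M i j)).map (gCW cs k u)).prod := by
  rw [show gCW cs k u = fun x => RingQuot.mkAlgHom k (CWrel cs k u) (FreeAlgebra.ι k (Sum.inl x))
    from rfl]
  simpa only [map_list_prod, List.map_map, Function.comp_def, gCW, gf] using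
    RingQuot.mkAlgHom_rel k (CWrel.braid (cs := cs) (k := k) (u := u) i j h)

/-- Product of `e`'s along a list of reflections. -/
def eList (L : List (Refl cs)) : CW cs k u := (L.map (eCW cs k u)).prod

lemma eList_nil : eList cs k u [] = 1 := rfl

lemma eList_cons (t : Refl cs) (L : List (Refl cs)) :
    eList cs k u (t :: L) = eCW cs k u t * eList cs k u L := by
  simp [eList]

lemma eCW_commute_eList (t : Refl cs) (L : List (Refl cs)) :
    Commute (eCW cs k u t) (eList cs k u L) := by
  induction L with
  | nil => exact Commute.one_right _
  | cons a L ih =>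
    rw [eList_cons]
    exact (eCW_commute cs k u t a).mul_right ih

lemma eList_mul_eCW_mem {t : Refl cs} {L : List (Refl cs)} (h : t ∈ L) :
    eList cs k u L * eCW cs k u t = eList cs k u L := by
  induction L with
  | nil => cases h
  | cons a L ih =>
    rw [eList_cons, mul_assoc]
    rcases List.mem_cons.1 h with rfl | h
    · rw [← (eCW_commute_eList cs k u t L).eq, ← mul_assoc, eCW_idem]
    · rw [ih h]

lemma eCW_mem_mul_eList {t : Refl cs} {L : List (Refl cs)} (h : t ∈ L) :
    eCW cs k u t * eList cs k u L = eList cs k u L := by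
  rw [(eCW_commute_eList cs k u t L).eq, eList_mul_eCW_mem cs k u h]

lemma conjR_simple_conjR_simple (i : B) (t : Refl cs) :
    conjR cs (cs.simple i) (conjR cs (cs.simple i) t) = t := by
  apply Subtype.ext
  show cs.simple i * (cs.simple i * t.1 * (cs.simple i)⁻¹) * (cs.simple i)⁻¹ = t.1
  simp only [cs.inv_simple, ← mul_assoc, cs.simple_mul_simple_self, one_mul]
  rw [mul_assoc, cs.simple_mul_simple_self, mul_one]

lemma conjR_simple_simpleR (i : B) :
    conjR cs (cs.simple i) (simpleR cs i) = simpleR cs i := by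
  apply Subtype.ext
  show cs.simple i * cs.simple i * (cs.simple i)⁻¹ = cs.simple i
  rw [cs.simple_mul_simple_self, one_mul, cs.inv_simple]

lemma eCW_simple_conj (i : B) (t : Refl cs) :
    eCW cs k u (simpleR cs i) * eCW cs k u t =
      eCW cs k u (simpleR cs i) * eCW cs k u (conjR cs (cs.simple i) t) :=
  eCW_conj cs k u (simpleR cs i) t

lemma eCW_simple_mul_eList_map (i : B) (L : List (Refl cs)) :
    eCW cs k u (simpleR cs i) * eList cs k u (L.map (conjR cs (cs.simple i))) =
      eCW cs k u (simpleR cs i) * eList cs k u L := by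
  induction L with
  | nil => simp
  | cons t L ih =>
    rw [List.map_cons, eList_cons, eList_cons, ← mul_assoc, ← mul_assoc,
      ← eCW_simple_conj cs k u i t, (eCW_commute cs k u (simpleR cs i) t).eq,
      mul_assoc, mul_assoc, ih]

lemma gCW_mul_eList (i : B) (L : List (Refl cs)) :
    gCW cs k u i * eList cs k u L =
      eList cs k u (L.map (conjR cs (cs.simple i))) * gCW cs k u i := by
  induction L with
  | nil => simp [eList_nil]
  | cons t L ih =>
    rw [eList_cons, List.map_cons, eList_cons, ← mul_assoc, gCW_move, mul_assoc, ih, ← mul_assoc]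

section Absorb

variable {L₀ : List (Refl cs)}

lemma eList_mul_eCW_conj_simple (hL₀ : ∀ i, simpleR cs i ∈ L₀) (i : B) (t : Refl cs) :
    eList cs k u L₀ * eCW cs k u (conjR cs (cs.simple i) t) = eList cs k u L₀ * eCW cs k u t := by
  have hs : eList cs k u L₀ * eCW cs k u (simpleR cs i) = eList cs k u L₀ :=
    eList_mul_eCW_mem cs k u (hL₀ i)
  calc eList cs k u L₀ * eCW cs k u (conjR cs (cs.simple i) t)
      = eList cs k u L₀ * (eCW cs k u (simpleR cs i) * eCW cs k u (conjR cs (cs.simple i) t)) := by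
        rw [← mul_assoc, hs]
    _ = eList cs k u L₀ * (eCW cs k u (simpleR cs i) * eCW cs k u t) := by
        rw [eCW_simple_conj cs k u i (conjR cs (cs.simple i) t), conjR_simple_conjR_simple]
    _ = eList cs k u L₀ * eCW cs k u t := by rw [← mul_assoc, hs]

lemma conjR_one (t : Refl cs) : conjR cs 1 t = t := by
  apply Subtype.ext; simp [conjR]

lemma conjR_mul (w w' : W) (t : Refl cs) :
    conjR cs (w * w') t = conjR cs w (conjR cs w' t) := by
  apply Subtype.ext
  show (w * w') * t.1 * (w * w')⁻¹ = w * (w' * t.1 * w'⁻¹) * w⁻¹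
  rw [mul_inv_rev]
  group

lemma eList_mul_eCW_conj_word (hL₀ : ∀ i, simpleR cs i ∈ L₀) (l : List B) (t : Refl cs) :
    eList cs k u L₀ * eCW cs k u (conjR cs (cs.wordProd l) t) = eList cs k u L₀ * eCW cs k u t := by
  induction l generalizing t with
  | nil => rw [CoxeterSystem.wordProd_nil, conjR_one]
  | cons i l ih =>
    rw [CoxeterSystem.wordProd_cons, conjR_mul, eList_mul_eCW_conj_simple cs k u hL₀, ih]

lemma eList_absorb (hL₀ : ∀ i, simpleR cs i ∈ L₀) (t : Refl cs) :
    eList cs k u L₀ * eCW cs k u t = eList cs k u L₀ := by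
  obtain ⟨w, i, ht⟩ := t.2
  obtain ⟨l, rfl⟩ := cs.wordProd_surjective w
  have h : t = conjR cs (cs.wordProd l) (simpleR cs i) := Subtype.ext ht
  rw [h, eList_mul_eCW_conj_word cs k u hL₀, eList_mul_eCW_mem cs k u (hL₀ i)]

lemma eList_mul_eList (hL₀ : ∀ i, simpleR cs i ∈ L₀) (L : List (Refl cs)) :
    eList cs k u L₀ * eList cs k u L = eList cs k u L₀ := by
  induction L with
  | nil => rw [eList_nil, mul_one]
  | cons t L ih => rw [eList_cons, ← mul_assoc, eList_absorb cs k u hL₀, ih]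

lemma gCW_comm_eList (hL₀ : ∀ i, simpleR cs i ∈ L₀) (i : B) :
    gCW cs k u i * eList cs k u L₀ = eList cs k u L₀ * gCW cs k u i := by
  rw [gCW_mul_eList]
  congr 1
  have hmem : simpleR cs i ∈ L₀.map (conjR cs (cs.simple i)) := by
    rw [← conjR_simple_simpleR cs i]
    exact List.mem_map_of_mem (hL₀ i)
  calc eList cs k u (L₀.map (conjR cs (cs.simple i)))
      = eCW cs k u (simpleR cs i) * eList cs k u (L₀.map (conjR cs (cs.simple i))) :=
        (eCW_mem_mul_eList cs k u hmem).symm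
    _ = eCW cs k u (simpleR cs i) * eList cs k u L₀ := eCW_simple_mul_eList_map cs k u i L₀
    _ = eList cs k u L₀ := eCW_mem_mul_eList cs k u (hL₀ i)

lemma eList_central (hL₀ : ∀ i, simpleR cs i ∈ L₀) (x : CW cs k u) :
    eList cs k u L₀ * x = x * eList cs k u L₀ := by
  obtain ⟨y, rfl⟩ := RingQuot.mkAlgHom_surjective k (CWrel cs k u) x
  induction y using FreeAlgebra.induction with
  | grade0 r => rw [AlgHom.commutes]; exact (Algebra.commutes r _).symm
  | grade1 g =>
    cases g with
    | inl i => exact (gCW_comm_eList cs k u hL₀ i).symm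
    | inr t => exact ((eCW_commute_eList cs k u t L₀).eq).symm
  | mul a b ha hb => rw [map_mul, ← mul_assoc, ha, mul_assoc, hb, ← mul_assoc]
  | add a b ha hb => rw [map_add, mul_add, add_mul, ha, hb]

end Absorb

end Splitting

section Top

variable {B : Type} [Fintype B] {M : CoxeterMatrix B} {W : Type} [Group W]
  (cs : CoxeterSystem M W) (k : Type) [CommRing k] (u : B → k)

/-- The canonical list of simple reflections. -/
def Ltop : List (Refl cs) := (Finset.univ.image (simpleR cs)).toList

lemma mem_Ltop (i : B) : simpleR cs i ∈ Ltop cs := by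
  simp [Ltop, Finset.mem_toList]

lemma eTop_eq_eList : eTop cs k u = eList cs k u (Ltop cs) := by
  rw [eTop, eJ]
  refine (Finset.noncommProd_congr (Finset.toList_toFinset _).symm (fun _ _ => rfl) _).trans ?_
  exact Finset.noncommProd_toFinset _ _ _ (Finset.nodup_toList _)

lemma eTop_central (x : CW cs k u) : eTop cs k u * x = x * eTop cs k u := by
  rw [eTop_eq_eList]
  exact eList_central cs k u (mem_Ltop cs) x

lemma eTop_idem : eTop cs k u * eTop cs k u = eTop cs k u := by
  rw [eTop_eq_eList]
  exact eList_mul_eList cs k u (mem_Ltop cs) _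

lemma eTop_absorb (t : Refl cs) : eTop cs k u * eCW cs k u t = eTop cs k u := by
  rw [eTop_eq_eList]
  exact eList_absorb cs k u (mem_Ltop cs) t

lemma eTop_pow_mul_self (n : ℕ) : eTop cs k u ^ n * eTop cs k u = eTop cs k u := by
  induction n with
  | zero => rw [pow_zero, one_mul]
  | succ n ih => rw [pow_succ, mul_assoc, eTop_idem, ih]

lemma e_mul_mul_e (x : CW cs k u) :
    eTop cs k u * (x * eTop cs k u) = eTop cs k u * x := by
  rw [eTop_central cs k u (x * eTop cs k u), mul_assoc, eTop_idem, ← eTop_central cs k u x]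

/-- The algebra map `Ψ : FreeAlgebra k B → C_W(u)`, `ι i ↦ g_i e`. -/
def psi : FreeAlgebra k B →ₐ[k] CW cs k u :=
  FreeAlgebra.lift k (fun i => gCW cs k u i * eTop cs k u)

lemma psi_ι (i : B) : psi cs k u (FreeAlgebra.ι k i) = gCW cs k u i * eTop cs k u :=
  FreeAlgebra.lift_ι_apply _ _

lemma prod_map_psi (l : List B) :
    (l.map (fun i => gCW cs k u i * eTop cs k u)).prod =
      (l.map (gCW cs k u)).prod * eTop cs k u ^ l.length := by
  induction l with
  | nil => simp
  | cons i l ih =>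
    rw [List.map_cons, List.prod_cons, ih, List.map_cons, List.prod_cons, List.length_cons,
      pow_succ', mul_assoc (gCW cs k u i), ← mul_assoc (eTop cs k u), eTop_central, mul_assoc,
      ← mul_assoc]

lemma ge_quad (i : B) :
    (gCW cs k u i * eTop cs k u) * (gCW cs k u i * eTop cs k u) =
      algebraMap k (CW cs k u) (u i) * eTop cs k u +
        algebraMap k (CW cs k u) (u i - 1) * (gCW cs k u i * eTop cs k u) := by
  set g := gCW cs k u i with hg
  set e := eTop cs k u with he
  set es := eCW cs k u (simpleR cs i) with hes
  set c := algebraMap k (CW cs k u) (u i - 1) with hc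
  have hcent : ∀ x : CW cs k u, e * x = x * e := eTop_central cs k u
  have hidem : e * e = e := eTop_idem cs k u
  have hese : es * e = e := by rw [← hcent es]; exact eTop_absorb cs k u _
  have h1 : (g * e) * (g * e) = g * g * e := by
    rw [mul_assoc g e, hcent (g * e), mul_assoc g e e, hidem, ← mul_assoc]
  rw [h1, gCW_quad cs k u i, ← hg, ← hes, ← hc, add_mul, one_mul]
  have h2 : c * es * (1 + g) * e = c * (e * (1 + g)) := by
    rw [mul_assoc (c * es), ← hcent (1 + g), ← mul_assoc, mul_assoc c es e, hese, mul_assoc]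
  rw [h2, mul_add e 1 g, mul_one, hcent g, mul_add c e (g * e), ← add_assoc]
  have haM : algebraMap k (CW cs k u) (u i) = c + 1 := by
    rw [hc, map_sub, map_one, sub_add_cancel]
  rw [haM, add_mul, one_mul, add_comm e (c * e)]

lemma psi_hrel {a b : FreeAlgebra k B} (h : Hrel M k u a b) :
    eTop cs k u * psi cs k u a = eTop cs k u * psi cs k u b := by
  cases h with
  | braid i j hij =>
    congr 1
    rw [map_list_prod, map_list_prod, List.map_map, List.map_map]
    have hψ : (⇑(psi cs k u) ∘ FreeAlgebra.ι k) = fun i => gCW cs k u i * eTop cs k u :=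
      funext fun i => psi_ι cs k u i
    rw [hψ, prod_map_psi, prod_map_psi, CoxeterSystem.length_alternatingWord,
      CoxeterSystem.length_alternatingWord, gCW_braid cs k u i j hij]
  | quad i =>
    rw [map_mul, psi_ι, map_add, map_mul, psi_ι, AlgHom.commutes, AlgHom.commutes, ge_quad,
      mul_add, mul_add]
    congr 1
    exact e_mul_mul_e cs k u _

lemma q_wd {a b : FreeAlgebra k B} (h : RingQuot.Rel (Hrel M k u) a b) :
    eTop cs k u * psi cs k u a = eTop cs k u * psi cs k u b := by
  induction h with
  | of h => exact psi_hrel cs k u h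
  | add_left h ih => rw [map_add, map_add, mul_add, mul_add, ih]
  | mul_left h ih =>
    rw [map_mul, map_mul, ← mul_assoc, ← mul_assoc, ih]
  | mul_right h ih =>
    rw [map_mul, map_mul, ← mul_assoc, ← mul_assoc, eTop_central, mul_assoc, mul_assoc, ih]

/-- The underlying function of `𝔮`. -/
def qRaw : HW M k u → CW cs k u := fun h =>
  Quot.lift (fun x => eTop cs k u * psi cs k u x) (fun _ _ hab => q_wd cs k u hab) h.toQuot

lemma e_sandwich (x y : CW cs k u) :
    (eTop cs k u * x) * (eTop cs k u * y) = eTop cs k u * (x * y) := by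
  rw [mul_assoc, ← mul_assoc x, ← eTop_central cs k u x, ← mul_assoc, ← mul_assoc, eTop_idem,
    mul_assoc]

lemma qRaw_mk (x : FreeAlgebra k B) :
    qRaw cs k u (RingQuot.mkAlgHom k (Hrel M k u) x) = eTop cs k u * psi cs k u x := by
  have h1 : RingQuot.mkAlgHom k (Hrel M k u) x = RingQuot.mkRingHom (Hrel M k u) x := by
    rw [← RingQuot.mkAlgHom_coe k (Hrel M k u)]
    rfl
  rw [h1, RingQuot.mkRingHom_def]
  rfl

lemma qRaw_mul (x y : HW M k u) :
    qRaw cs k u (x * y) = qRaw cs k u x * qRaw cs k u y := by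
  obtain ⟨a, rfl⟩ := RingQuot.mkAlgHom_surjective k (Hrel M k u) x
  obtain ⟨b, rfl⟩ := RingQuot.mkAlgHom_surjective k (Hrel M k u) y
  rw [← map_mul, qRaw_mk, qRaw_mk, qRaw_mk, map_mul, e_sandwich]

/-- The splitting map `𝔮`, as a non-unital algebra morphism. -/
def qHom : HW M k u →ₙₐ[k] CW cs k u where
  toFun := qRaw cs k u
  map_smul' := by
    intro r x
    obtain ⟨a, rfl⟩ := RingQuot.mkAlgHom_surjective k (Hrel M k u) x
    show qRaw cs k u (r • RingQuot.mkAlgHom k (Hrel M k u) a) = _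
    rw [← map_smul, qRaw_mk, qRaw_mk, map_smul, mul_smul_comm]
    rfl
  map_zero' := by
    show qRaw cs k u 0 = 0
    rw [← map_zero (RingQuot.mkAlgHom k (Hrel M k u)), qRaw_mk, map_zero, mul_zero]
  map_add' := by
    intro x y
    obtain ⟨a, rfl⟩ := RingQuot.mkAlgHom_surjective k (Hrel M k u) x
    obtain ⟨b, rfl⟩ := RingQuot.mkAlgHom_surjective k (Hrel M k u) y
    show qRaw cs k u _ = qRaw cs k u _ + qRaw cs k u _
    rw [← map_add, qRaw_mk, qRaw_mk, qRaw_mk, map_add, mul_add]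
  map_mul' := qRaw_mul cs k u

lemma qHom_mk (x : FreeAlgebra k B) :
    qHom cs k u (RingQuot.mkAlgHom k (Hrel M k u) x) = eTop cs k u * psi cs k u x :=
  qRaw_mk cs k u x

end Top

/-- For `S` finite, `e_W = ∏_{s∈S} e_s` is a central idempotent of
`C_W(u)`, and `T_w ↦ g_w e_W` defines a non-unital `k`-algebra morphism
`𝔮 : H_W(u) → C_W(u)` splitting `𝔭`, i.e. `𝔭 ∘ 𝔮 = id`. -/
theorem statement5 {B : Type} [Fintype B] {M : CoxeterMatrix B} {W : Type} [Group W]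
    (cs : CoxeterSystem M W) (k : Type) [CommRing k] (u : B → k)
    (hu : ∀ i j : B, IsConj (cs.simple i) (cs.simple j) → u i = u j)
    (p : CW cs k u →ₐ[k] HW M k u)
    (hpg : ∀ i : B, p (gCW cs k u i) = THW M k u i)
    (hpe : ∀ t : Refl cs, p (eCW cs k u t) = 1) :
    (∀ x : CW cs k u, eTop cs k u * x = x * eTop cs k u) ∧
    eTop cs k u * eTop cs k u = eTop cs k u ∧
    ∃ q : HW M k u →ₙₐ[k] CW cs k u,
      (∀ l : List B, cs.IsReduced l →
        q ((l.map (THW M k u)).prod) = (l.map (gCW cs k u)).prod * eTop cs k u) ∧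
      (∀ h : HW M k u, p (q h) = h) := by
  classical
  have hpe' : p (eTop cs k u) = 1 := by
    rw [eTop_eq_eList, eList, map_list_prod, List.map_map]
    refine List.prod_eq_one ?_
    intro x hx
    simp only [List.mem_map, Function.comp_apply] at hx
    obtain ⟨t, -, rfl⟩ := hx
    exact hpe t
  refine ⟨eTop_central cs k u, eTop_idem cs k u, qHom cs k u, ?_, ?_⟩
  · intro l _
    have hprod : (l.map (THW M k u)).prod =
        RingQuot.mkAlgHom k (Hrel M k u) ((l.map (FreeAlgebra.ι k)).prod) := by
      rw [map_list_prod, List.map_map]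
      rfl
    rw [hprod, qHom_mk, map_list_prod, List.map_map]
    have hψ : (⇑(psi cs k u) ∘ FreeAlgebra.ι k) = fun i => gCW cs k u i * eTop cs k u :=
      funext fun i => psi_ι cs k u i
    rw [hψ, prod_map_psi, eTop_central, mul_assoc, eTop_pow_mul_self]
  · intro h
    obtain ⟨x, rfl⟩ := RingQuot.mkAlgHom_surjective k (Hrel M k u) h
    rw [qHom_mk, map_mul, hpe', one_mul]
    have hcomp : p.comp (psi cs k u) = RingQuot.mkAlgHom k (Hrel M k u) := by
      apply FreeAlgebra.hom_ext
      funext i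
      show p (psi cs k u (FreeAlgebra.ι k i)) = RingQuot.mkAlgHom k (Hrel M k u) (FreeAlgebra.ι k i)
      rw [psi_ι, map_mul, hpg, hpe', mul_one]
      rfl
    calc p (psi cs k u x) = (p.comp (psi cs k u)) x := rfl
      _ = RingQuot.mkAlgHom k (Hrel M k u) x := by rw [hcomp]


end CWpaper
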